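/- arXiv:2504.04433 — 4 statements merged into one kernel-verified Lean document; each statement's English description precedes it below -/
import Mathlib

section
/- Let f be a formal power series in n variables with blocks f[0], f[1], …, and let m ∈ ℕ. Then for every multi-index α with |α| = k, the coefficient of f^m at α equals Σ (m!/(v₀!⋯v_k!)) · (f[0]^{v₀}⋯f[k]^{v_k})_α, where the sum ranges over all nonnegative integer tuples (v₀,…,v_k) with v₀+v₁+⋯+v_k = m and v₁+2v₂+⋯+k·v_k = k. -/
/-- The `k`-th block of `f`: coefficients of total degree `k` kept, others zero. -/
noncomputable def block {F : Type*} [Field F] {n : ℕ}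
    (f : MvPowerSeries (Fin n) F) (k : ℕ) : MvPowerSeries (Fin n) F :=
  fun α => if (∑ i, α i) = k then MvPowerSeries.coeff α f else 0

section aux

variable {F : Type*} [Field F] {n : ℕ}

open MvPowerSeries

/-- Homogeneity predicate: all coefficients outside total degree `d` vanish. -/
def Hom (d : ℕ) (g : MvPowerSeries (Fin n) F) : Prop :=
  ∀ β : Fin n →₀ ℕ, (∑ i, β i) ≠ d → MvPowerSeries.coeff β g = 0

lemma hom_block (f : MvPowerSeries (Fin n) F) (j : ℕ) : Hom j (block f j) := by
  intro β hβ
  simp only [block, MvPowerSeries.coeff_apply]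
  exact if_neg hβ

lemma hom_one : Hom (F := F) (n := n) 0 1 := by
  intro β hβ
  rw [MvPowerSeries.coeff_one, if_neg]
  rintro rfl
  simp at hβ

lemma hom_mul {d e : ℕ} {g h : MvPowerSeries (Fin n) F} (hg : Hom d g) (hh : Hom e h) :
    Hom (d + e) (g * h) := by
  intro β hβ
  rw [MvPowerSeries.coeff_mul]
  refine Finset.sum_eq_zero fun p hp => ?_
  rw [Finset.HasAntidiagonal.mem_antidiagonal] at hp
  by_cases h1 : (∑ i, p.1 i) = d
  · have h2 : (∑ i, p.2 i) ≠ e := by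
      intro h2
      apply hβ
      rw [← hp]
      simp [Finsupp.add_apply, Finset.sum_add_distrib, h1, h2]
    rw [hh _ h2, mul_zero]
  · rw [hg _ h1, zero_mul]

lemma hom_pow {d : ℕ} {g : MvPowerSeries (Fin n) F} (hg : Hom d g) (v : ℕ) :
    Hom (d * v) (g ^ v) := by
  induction v with
  | zero => simpa using hom_one
  | succ v ih =>
    rw [pow_succ, Nat.mul_succ]
    exact hom_mul ih hg

lemma hom_prod {ι : Type*} (s : Finset ι) (d : ι → ℕ) (g : ι → MvPowerSeries (Fin n) F)
    (hg : ∀ i ∈ s, Hom (d i) (g i)) :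
    Hom (∑ i ∈ s, d i) (∏ i ∈ s, g i) := by
  classical
  induction s using Finset.induction with
  | empty => simpa using hom_one
  | insert a s hi ih =>
    rw [Finset.sum_insert hi, Finset.prod_insert hi]
    exact hom_mul (hg a (Finset.mem_insert_self a s))
      (ih fun i hi' => hg i (Finset.mem_insert_of_mem hi'))

/-- Two series agreeing in degrees ≤ k. -/
def EqBelow (k : ℕ) (g h : MvPowerSeries (Fin n) F) : Prop :=
  ∀ β : Fin n →₀ ℕ, (∑ i, β i) ≤ k → MvPowerSeries.coeff β g = MvPowerSeries.coeff β h

lemma eqBelow_mul {k : ℕ} {g g' h h' : MvPowerSeries (Fin n) F}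
    (h1 : EqBelow k g g') (h2 : EqBelow k h h') : EqBelow k (g * h) (g' * h') := by
  intro β hβ
  rw [MvPowerSeries.coeff_mul, MvPowerSeries.coeff_mul]
  refine Finset.sum_congr rfl fun p hp => ?_
  rw [Finset.HasAntidiagonal.mem_antidiagonal] at hp
  have hsum : (∑ i, p.1 i) + (∑ i, p.2 i) = ∑ i, β i := by
    rw [← hp]; simp [Finsupp.add_apply, Finset.sum_add_distrib]
  rw [h1 _ (le_trans (le_trans (Nat.le_add_right _ _) hsum.le) hβ),
    h2 _ (le_trans (le_trans (Nat.le_add_left _ _) hsum.le) hβ)]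

lemma eqBelow_pow {k : ℕ} {g g' : MvPowerSeries (Fin n) F} (h : EqBelow k g g') (m : ℕ) :
    EqBelow k (g ^ m) (g' ^ m) := by
  induction m with
  | zero => intro β hβ; simp
  | succ m ih => rw [pow_succ, pow_succ]; exact eqBelow_mul ih h

end aux

/-- For `|α| = k`, the coefficient of `f^m` at `α` equals
`Σ (m!/(v₀!⋯v_k!)) · (f[0]^{v₀} ⋯ f[k]^{v_k})_α`, the sum over all
`(v₀,…,v_k)` with `v₀ + ⋯ + v_k = m` and `v₁ + 2v₂ + ⋯ + k·v_k = k`. -/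
theorem coeff_pow_blocks {F : Type*} [Field F] {n : ℕ}
    (f : MvPowerSeries (Fin n) F) (m : ℕ) (k : ℕ) (α : Fin n →₀ ℕ)
    (hα : (∑ i, α i) = k) :
    MvPowerSeries.coeff α (f ^ m) =
      ∑ v ∈ (Finset.Nat.antidiagonalTuple (k + 1) m).filter
          (fun v => ∑ i : Fin (k + 1), (i : ℕ) * v i = k),
        (Nat.multinomial Finset.univ v : F) *
          MvPowerSeries.coeff α (∏ i : Fin (k + 1), block f (i : ℕ) ^ v i) := by
  classical
  set g : MvPowerSeries (Fin n) F := ∑ i : Fin (k + 1), block f (i : ℕ) with hg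
  have hfg : EqBelow k f g := by
    intro β hβ
    rw [hg, map_sum]
    have : ∀ i : Fin (k + 1), MvPowerSeries.coeff β (block f (i : ℕ)) =
        if (∑ j, β j) = (i : ℕ) then MvPowerSeries.coeff β f else 0 := fun i => rfl
    simp_rw [this]
    rw [Finset.sum_eq_single (⟨∑ j, β j, Nat.lt_succ_of_le hβ⟩ : Fin (k + 1))]
    · simp
    · intro b _ hb
      rw [if_neg]
      exact fun h => hb (Fin.ext h.symm)
    · simp
  have key : MvPowerSeries.coeff α (f ^ m) = MvPowerSeries.coeff α (g ^ m) :=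
    eqBelow_pow hfg m α hα.le
  rw [key, hg, Finset.sum_pow_eq_sum_piAntidiag, map_sum,
    Finset.piAntidiag_univ_fin_eq_antidiagonalTuple m (k + 1)]
  simp_rw [← nsmul_eq_mul, map_nsmul, nsmul_eq_mul]
  rw [eq_comm, Finset.sum_filter_of_ne]
  · intro v hv hne
    by_contra hdeg
    apply hne
    have hhom : Hom (∑ i : Fin (k + 1), (i : ℕ) * v i)
        (∏ i : Fin (k + 1), block f (i : ℕ) ^ v i) :=
      hom_prod Finset.univ _ _ fun i _ => hom_pow (hom_block f (i : ℕ)) (v i)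
    rw [hhom α (by rw [hα]; exact fun h => hdeg h.symm)]
    ring
end

section
/- Chain Rule: Let f be a formal power series in n variables and G = (g₁,…,gₙ) a vector of formal power series in n variables such that the family (G^α)_{α∈ℕ₀ⁿ} admits addition (for each multi-index β only finitely many G^α have nonzero coefficient at indices ≤ β). Then for every j, D_j(f∘G) = Σ_{i=1}^n (D_i(f)∘G) · D_j(g_i). -/
open MvPowerSeries

/-- The formal partial derivative `D_j f = Σ_α (α_j + 1) a_{α + e_j} X^α`. -/
noncomputable def D {F : Type*} [Field F] {n : ℕ} (j : Fin n)
    (f : MvPowerSeries (Fin n) F) : MvPowerSeries (Fin n) F :=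
  fun α => ((α j + 1 : ℕ) : F) * coeff (α + Finsupp.single j 1) f

/-- The composition `f ∘ G = Σ_α a_α g₁^{α₁}⋯gₙ^{αₙ}`, defined coefficientwise
by the (finitely supported) sum of the `γ`-coefficients. -/
noncomputable def comp {F : Type*} [Field F] {n : ℕ}
    (f : MvPowerSeries (Fin n) F) (G : Fin n → MvPowerSeries (Fin n) F) :
    MvPowerSeries (Fin n) F :=
  fun γ => ∑ᶠ α : Fin n →₀ ℕ, coeff α f * coeff γ (∏ i, (G i) ^ (α i))

section Aux

variable {F : Type*} [Field F] {n : ℕ}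

lemma coeff_D (j : Fin n) (h : MvPowerSeries (Fin n) F) (γ : Fin n →₀ ℕ) :
    coeff γ (D j h) = ((γ j + 1 : ℕ) : F) * coeff (γ + Finsupp.single j 1) h := rfl

lemma D_one (j : Fin n) : D j (1 : MvPowerSeries (Fin n) F) = 0 := by
  classical
  ext γ
  rw [coeff_D, coeff_one, map_zero, if_neg, mul_zero]
  intro h
  have := DFunLike.congr_fun h j
  simp at this


open Finset in
lemma sum_antidiag_shift (j : Fin n) (γ : Fin n →₀ ℕ) (w : (Fin n →₀ ℕ) → (Fin n →₀ ℕ) → F) :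
    ∑ p ∈ antidiagonal (γ + Finsupp.single j 1), (((p.1 : Fin n →₀ ℕ) j : ℕ) : F) * w p.1 p.2
      = ∑ p ∈ antidiagonal γ, ((p.1 j + 1 : ℕ) : F) * w (p.1 + Finsupp.single j 1) p.2 := by
  classical
  rw [← Finset.sum_filter_of_ne (p := fun p : (Fin n →₀ ℕ) × (Fin n →₀ ℕ) => p.1 j ≠ 0)
    (by intro x _ hx h0; apply hx; rw [h0, Nat.cast_zero, zero_mul])]
  refine Finset.sum_nbij'
    (i := fun p : (Fin n →₀ ℕ) × (Fin n →₀ ℕ) => ((p.1 - Finsupp.single j 1 : Fin n →₀ ℕ), p.2))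
    (j := fun p : (Fin n →₀ ℕ) × (Fin n →₀ ℕ) => ((p.1 + Finsupp.single j 1 : Fin n →₀ ℕ), p.2))
    ?_ ?_ ?_ ?_ ?_
  · intro p hp
    simp only [Finset.mem_filter, Finset.HasAntidiagonal.mem_antidiagonal] at hp
    obtain ⟨hps, hpj⟩ := hp
    have hle : Finsupp.single j 1 ≤ p.1 := by
      rw [Finsupp.single_le_iff]; omega
    simp only [Finset.HasAntidiagonal.mem_antidiagonal]
    have h2 : p.1 - Finsupp.single j 1 + p.2 + Finsupp.single j 1
        = γ + Finsupp.single j 1 := by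
      rw [add_right_comm, tsub_add_cancel_of_le hle, hps]
    exact add_right_cancel h2
  · intro p hp
    simp only [Finset.HasAntidiagonal.mem_antidiagonal] at hp
    simp only [Finset.mem_filter, Finset.HasAntidiagonal.mem_antidiagonal]
    refine ⟨by rw [add_right_comm, hp], by simp⟩
  · intro p hp
    simp only [Finset.mem_filter, Finset.HasAntidiagonal.mem_antidiagonal] at hp
    have hle : Finsupp.single j 1 ≤ p.1 := by
      rw [Finsupp.single_le_iff]; omega
    simp [tsub_add_cancel_of_le hle]
  · intro p _
    simp
  · intro p hp
    simp only [Finset.mem_filter, Finset.HasAntidiagonal.mem_antidiagonal] at hp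
    obtain ⟨hps, hpj⟩ := hp
    have hle : Finsupp.single j 1 ≤ p.1 := by
      rw [Finsupp.single_le_iff]; omega
    have h1 : ((p.1 - Finsupp.single j 1 : Fin n →₀ ℕ) j + 1 : ℕ) = p.1 j := by
      rw [Finsupp.tsub_apply, Finsupp.single_eq_same]; omega
    simp only [h1, tsub_add_cancel_of_le hle]

open Finset in
lemma sum_antidiag_shift₂ (j : Fin n) (γ : Fin n →₀ ℕ) (w : (Fin n →₀ ℕ) → (Fin n →₀ ℕ) → F) :
    ∑ p ∈ antidiagonal (γ + Finsupp.single j 1), (((p.2 : Fin n →₀ ℕ) j : ℕ) : F) * w p.1 p.2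
      = ∑ p ∈ antidiagonal γ, ((p.2 j + 1 : ℕ) : F) * w p.1 (p.2 + Finsupp.single j 1) := by
  classical
  rw [← Finset.sum_filter_of_ne (p := fun p : (Fin n →₀ ℕ) × (Fin n →₀ ℕ) => p.2 j ≠ 0)
    (by intro x _ hx h0; apply hx; rw [h0, Nat.cast_zero, zero_mul])]
  refine Finset.sum_nbij'
    (i := fun p : (Fin n →₀ ℕ) × (Fin n →₀ ℕ) => (p.1, (p.2 - Finsupp.single j 1 : Fin n →₀ ℕ)))
    (j := fun p : (Fin n →₀ ℕ) × (Fin n →₀ ℕ) => (p.1, (p.2 + Finsupp.single j 1 : Fin n →₀ ℕ)))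
    ?_ ?_ ?_ ?_ ?_
  · intro p hp
    simp only [Finset.mem_filter, Finset.HasAntidiagonal.mem_antidiagonal] at hp
    obtain ⟨hps, hpj⟩ := hp
    have hle : Finsupp.single j 1 ≤ p.2 := by
      rw [Finsupp.single_le_iff]; omega
    simp only [Finset.HasAntidiagonal.mem_antidiagonal]
    have h2 : p.1 + (p.2 - Finsupp.single j 1) + Finsupp.single j 1
        = γ + Finsupp.single j 1 := by
      rw [add_assoc, tsub_add_cancel_of_le hle, hps]
    exact add_right_cancel h2
  · intro p hp
    simp only [Finset.HasAntidiagonal.mem_antidiagonal] at hp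
    simp only [Finset.mem_filter, Finset.HasAntidiagonal.mem_antidiagonal]
    refine ⟨by rw [← add_assoc, hp], by simp⟩
  · intro p hp
    simp only [Finset.mem_filter, Finset.HasAntidiagonal.mem_antidiagonal] at hp
    have hle : Finsupp.single j 1 ≤ p.2 := by
      rw [Finsupp.single_le_iff]; omega
    simp [tsub_add_cancel_of_le hle]
  · intro p _
    simp
  · intro p hp
    simp only [Finset.mem_filter, Finset.HasAntidiagonal.mem_antidiagonal] at hp
    obtain ⟨hps, hpj⟩ := hp
    have hle : Finsupp.single j 1 ≤ p.2 := by
      rw [Finsupp.single_le_iff]; omega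
    have h1 : ((p.2 - Finsupp.single j 1 : Fin n →₀ ℕ) j + 1 : ℕ) = p.2 j := by
      rw [Finsupp.tsub_apply, Finsupp.single_eq_same]; omega
    simp only [h1, tsub_add_cancel_of_le hle]

open Finset in
lemma D_mul (j : Fin n) (f g : MvPowerSeries (Fin n) F) :
    D j (f * g) = D j f * g + f * D j g := by
  classical
  ext γ
  rw [map_add, coeff_mul, coeff_mul, coeff_D, coeff_mul]
  have key : ∀ p ∈ antidiagonal (γ + Finsupp.single j 1),
      ((γ j + 1 : ℕ) : F) * (coeff p.1 f * coeff p.2 g)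
        = (((p.1 : Fin n →₀ ℕ) j : ℕ) : F) * (coeff p.1 f * coeff p.2 g)
          + (((p.2 : Fin n →₀ ℕ) j : ℕ) : F) * (coeff p.1 f * coeff p.2 g) := by
    intro p hp
    rw [Finset.HasAntidiagonal.mem_antidiagonal] at hp
    have : (p.1 : Fin n →₀ ℕ) j + (p.2 : Fin n →₀ ℕ) j = γ j + 1 := by
      have := DFunLike.congr_fun hp j
      simpa using this
    rw [← add_mul, ← Nat.cast_add, this]
  rw [Finset.mul_sum, Finset.sum_congr rfl key, Finset.sum_add_distrib]
  congr 1
  · rw [sum_antidiag_shift j γ (fun a b => coeff a f * coeff b g)]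
    refine Finset.sum_congr rfl fun p _ => ?_
    rw [coeff_D]; ring
  · rw [sum_antidiag_shift₂ j γ (fun a b => coeff a f * coeff b g)]
    refine Finset.sum_congr rfl fun p _ => ?_
    rw [coeff_D]; ring

lemma D_pow (j : Fin n) (g : MvPowerSeries (Fin n) F) (k : ℕ) :
    D j (g ^ k) = k • (g ^ (k - 1) * D j g) := by
  induction k with
  | zero => simpa using D_one j
  | succ m ih =>
    rw [pow_succ, D_mul, ih, succ_nsmul]
    congr 1
    cases m with
    | zero => simp
    | succ m' =>
      rw [smul_mul_assoc]
      congr 1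
      rw [mul_assoc, mul_comm (D j g) g, ← mul_assoc, ← pow_succ]
      norm_num

lemma D_sum (j : Fin n) {ι : Type*} (s : Finset ι) (h : ι → MvPowerSeries (Fin n) F) :
    D j (∑ i ∈ s, h i) = ∑ i ∈ s, D j (h i) := by
  ext γ
  simp only [map_sum, coeff_D, Finset.mul_sum]

lemma D_prod (j : Fin n) {ι : Type*} [DecidableEq ι] (s : Finset ι)
    (h : ι → MvPowerSeries (Fin n) F) :
    D j (∏ i ∈ s, h i) = ∑ i ∈ s, (∏ i' ∈ s.erase i, h i') * D j (h i) := by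
  induction s using Finset.induction_on with
  | empty => simpa using D_one j
  | @insert a s ha ih =>
    rw [Finset.prod_insert ha, D_mul, ih, Finset.sum_insert ha, Finset.erase_insert ha,
      Finset.mul_sum]
    congr 1
    · exact mul_comm _ _
    refine Finset.sum_congr rfl (fun i hi => ?_)
    rw [Finset.erase_insert_of_ne (fun h : a = i => ha (h ▸ hi)),
      Finset.prod_insert (fun hm => ha (Finset.mem_of_mem_erase hm)), mul_assoc]

lemma finsum_shift {M : Type*} [AddCommMonoid M] (i : Fin n) (h : (Fin n →₀ ℕ) → M)
    (h0 : ∀ α : Fin n →₀ ℕ, α i = 0 → h α = 0) :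
    ∑ᶠ α : Fin n →₀ ℕ, h α = ∑ᶠ β : Fin n →₀ ℕ, h (β + Finsupp.single i 1) := by
  have hinj : Function.Injective (fun β : Fin n →₀ ℕ => β + Finsupp.single i 1) :=
    add_left_injective _
  rw [← finsum_mem_range hinj, ← finsum_mem_univ h]
  refine finsum_mem_inter_support_eq' _ _ _ fun α hα => ?_
  simp only [Set.mem_univ, Set.mem_range, true_iff]
  refine ⟨α - Finsupp.single i 1, ?_⟩
  have hi : α i ≠ 0 := fun hz => (Function.mem_support.mp hα) (h0 α hz)
  have hle : Finsupp.single i 1 ≤ α := by rw [Finsupp.single_le_iff]; omega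
  exact tsub_add_cancel_of_le hle

lemma sub_mem_union {i : Fin n} {S : Set (Fin n →₀ ℕ)} {α : Fin n →₀ ℕ}
    (h : α - Finsupp.single i 1 ∈ S) :
    α ∈ S ∪ (fun β : Fin n →₀ ℕ => β + Finsupp.single i 1) '' S := by
  rcases Nat.eq_zero_or_pos (α i) with h0 | h1
  · left
    have : α - Finsupp.single i 1 = α := by
      ext i'
      rw [Finsupp.tsub_apply, Finsupp.single_apply]
      split_ifs with hii
      · subst hii; omega
      · omega
    rwa [this] at h
  · right
    have hle : Finsupp.single i 1 ≤ α := by rw [Finsupp.single_le_iff]; omega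
    exact ⟨α - Finsupp.single i 1, h, tsub_add_cancel_of_le hle⟩

end Aux

open Finset

/-- Chain Rule: if the family `(G^α)` admits addition (for each `β` only
finitely many `α` give `G^α` a nonzero coefficient at some index `≤ β`),
then `D_j (f ∘ G) = Σ_i (D_i f ∘ G) · D_j g_i`. -/
theorem chain_rule {F : Type*} [Field F] {n : ℕ}
    (f : MvPowerSeries (Fin n) F) (G : Fin n → MvPowerSeries (Fin n) F)
    (hadd : ∀ β : Fin n →₀ ℕ,
      {α : Fin n →₀ ℕ | ∃ γ ≤ β, coeff γ (∏ i, (G i) ^ (α i)) ≠ 0}.Finite)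
    (j : Fin n) :
    D j (comp f G) = ∑ i, comp (D i f) G * D j (G i) := by
  classical
  set P : (Fin n →₀ ℕ) → MvPowerSeries (Fin n) F := fun α => ∏ i, (G i) ^ (α i) with hP
  set S : (Fin n →₀ ℕ) → Set (Fin n →₀ ℕ) :=
    fun δ => {α : Fin n →₀ ℕ | ∃ γ ≤ δ, coeff γ (P α) ≠ 0} with hS
  have hSfin : ∀ δ, (S δ).Finite := hadd
  -- coefficient of composition
  have hcomp : ∀ (h : MvPowerSeries (Fin n) F) (δ : Fin n →₀ ℕ),
      coeff δ (comp h G) = ∑ᶠ α : Fin n →₀ ℕ, coeff α h * coeff δ (P α) := fun _ _ => rfl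
  -- support bounds
  have hsupp1 : ∀ (δ : Fin n →₀ ℕ) (c : (Fin n →₀ ℕ) → F),
      (Function.support fun α => c α * coeff δ (P α)) ⊆ S δ := by
    intro δ c α hα
    refine ⟨δ, le_refl δ, fun hz => hα ?_⟩
    simp [hz]
  have hsupp2 : ∀ (γ : Fin n →₀ ℕ) (c : (Fin n →₀ ℕ) → F) (q : MvPowerSeries (Fin n) F),
      (Function.support fun α => c α * coeff γ (P α * q)) ⊆ S γ := by
    intro γ c q α hα
    by_contra hn
    simp only [Function.mem_support] at hα
    have hz : ∀ γ' ≤ γ, coeff γ' (P α) = 0 := by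
      intro γ' hγ'
      by_contra hzz
      exact hn ⟨γ', hγ', hzz⟩
    have : coeff γ (P α * q) = 0 := by
      rw [coeff_mul]
      refine Finset.sum_eq_zero fun p hp => ?_
      rw [Finset.HasAntidiagonal.mem_antidiagonal] at hp
      rw [hz p.1 (le_iff_exists_add.mpr ⟨p.2, hp.symm⟩), zero_mul]
    exact hα (by rw [this, mul_zero])
  -- derivative of P
  have hDP : ∀ (α : Fin n →₀ ℕ),
      D j (P α) = ∑ i, (α i) • (P (α - Finsupp.single i 1) * D j (G i)) := by
    intro α
    conv_lhs => rw [hP]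
    rw [D_prod]
    refine Finset.sum_congr rfl fun i _ => ?_
    rw [D_pow]
    rcases Nat.eq_zero_or_pos (α i) with h0 | h1
    · simp [h0]
    · have hPe : P (α - Finsupp.single i 1)
          = G i ^ (α i - 1) * ∏ i' ∈ Finset.univ.erase i, G i' ^ (α i') := by
        simp only [hP]
        rw [← Finset.mul_prod_erase Finset.univ _ (Finset.mem_univ i)]
        congr 1
        · rw [Finsupp.tsub_apply, Finsupp.single_eq_same]
        · refine Finset.prod_congr rfl fun i' hi' => ?_
          rw [Finsupp.tsub_apply,
            Finsupp.single_eq_of_ne (Finset.ne_of_mem_erase hi'), tsub_zero]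
      rw [hPe, mul_smul_comm]
      congr 1
      ring
  ext γ
  rw [map_sum, coeff_D, hcomp f,
    mul_finsum _ _]
  have step1 : ∀ α : Fin n →₀ ℕ,
      ((γ j + 1 : ℕ) : F) * (coeff α f * coeff (γ + Finsupp.single j 1) (P α))
        = ∑ i, coeff α f *
            (((α i : ℕ) : F) * coeff γ (P (α - Finsupp.single i 1) * D j (G i))) := by
    intro α
    have h1 : ((γ j + 1 : ℕ) : F) * coeff (γ + Finsupp.single j 1) (P α)
        = coeff γ (D j (P α)) := (coeff_D j (P α) γ).symm
    calc ((γ j + 1 : ℕ) : F) * (coeff α f * coeff (γ + Finsupp.single j 1) (P α))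
        = coeff α f * (((γ j + 1 : ℕ) : F) * coeff (γ + Finsupp.single j 1) (P α)) := by
          ring
      _ = coeff α f * coeff γ (D j (P α)) := by rw [h1]
      _ = _ := by
          rw [hDP α, map_sum, Finset.mul_sum]
          refine Finset.sum_congr rfl fun i _ => ?_
          rw [map_nsmul, nsmul_eq_mul]
  rw [finsum_congr step1]
  have hfin2 : ∀ i : Fin n, (Function.support (fun α : Fin n →₀ ℕ => coeff α f *
      (((α i : ℕ) : F) * coeff γ (P (α - Finsupp.single i 1) * D j (G i))))).Finite := by
    intro i
    refine Set.Finite.subset ((hSfin γ).union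
      ((hSfin γ).image (fun β : Fin n →₀ ℕ => β + Finsupp.single i 1))) ?_
    intro α hα
    refine sub_mem_union (i := i) (S := S γ) ?_
    simp only [Function.mem_support] at hα
    have hc : coeff γ (P (α - Finsupp.single i 1) * D j (G i)) ≠ 0 := by
      intro hz; exact hα (by rw [hz, mul_zero, mul_zero])
    refine hsupp2 γ (fun _ => 1) (D j (G i)) ?_
    simp only [Function.mem_support, one_mul]
    exact hc
  rw [finsum_sum_comm Finset.univ _ (fun i _ => hfin2 i)]
  refine Finset.sum_congr rfl fun i _ => ?_
  -- reindex the left finsum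
  rw [finsum_shift i _ (fun α h0 => by rw [h0, Nat.cast_zero, zero_mul, mul_zero])]
  -- compute the right side
  rw [coeff_mul]
  have hR1 : ∀ p ∈ antidiagonal γ,
      coeff p.1 (comp (D i f) G) * coeff p.2 (D j (G i))
        = ∑ᶠ β : Fin n →₀ ℕ,
            coeff β (D i f) * coeff p.1 (P β) * coeff p.2 (D j (G i)) := by
    intro p _
    rw [hcomp, finsum_mul _ _]
  rw [Finset.sum_congr rfl hR1,
    sum_finsum_comm (antidiagonal γ) _
      (fun p _ => (hSfin p.1).subset (fun β hβ => hsupp1 p.1 (fun β => coeff β (D i f))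
        (by
          simp only [Function.mem_support] at hβ ⊢
          intro hz
          exact hβ (by rw [hz, zero_mul]))))]
  refine finsum_congr fun β => ?_
  simp only [mul_assoc]
  rw [← Finset.mul_sum, ← coeff_mul, coeff_D]
  have hβ1 : ((β + Finsupp.single i 1 : Fin n →₀ ℕ) i : ℕ) = β i + 1 := by
    simp
  have hβ2 : (β + Finsupp.single i 1 : Fin n →₀ ℕ) - Finsupp.single i 1 = β :=
    add_tsub_cancel_right _ _
  rw [hβ1, hβ2]
  ring
end

section
/- Let G = (g₁,…,gₙ) be a vector of formal power series in n variables with zero constant terms such that the matrix of linear coefficients J_G(θ) = [coefficient of x_j in g_i] is invertible. Then there exists a vector H = (h₁,…,hₙ) of formal power series with zero constant terms such that H∘G = I = (x₁,…,xₙ). -/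
open MvPowerSeries

namespace CompInvAux

variable {F : Type*} [Field F] {n : ℕ}

lemma degree_eq_sum (δ : Fin n →₀ ℕ) : δ.degree = ∑ i, δ i := by
  rw [Finsupp.degree_apply]
  exact Finset.sum_subset (Finset.subset_univ _) fun i _ hi => by
    simpa using Finsupp.notMem_support_iff.mp hi

lemma degree_add (a b : Fin n →₀ ℕ) : (a + b).degree = a.degree + b.degree := by
  simp [degree_eq_sum, Finset.sum_add_distrib]

lemma degree_one_single {δ : Fin n →₀ ℕ} (h : δ.degree = 1) :
    ∃ j, δ = Finsupp.single j 1 := by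
  have hδ : δ ≠ 0 := by
    intro h0; rw [h0] at h; simp [map_zero] at h
  obtain ⟨j, hj⟩ := Finsupp.ne_iff.mp hδ
  simp only [Finsupp.coe_zero, Pi.zero_apply] at hj
  have hj1 : δ j = 1 := by
    have := Finsupp.le_degree j δ
    omega
  refine ⟨j, ?_⟩
  ext k
  rcases eq_or_ne k j with rfl | hkj
  · simp [hj1]
  · rw [Finsupp.single_apply, if_neg (by exact fun hh => hkj hh.symm)]
    have hs := degree_eq_sum δ
    rw [h] at hs
    have : ∑ i, δ i = δ j + ∑ i ∈ Finset.univ.erase j, δ i := by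
      rw [add_comm, Finset.sum_erase_add _ _ (Finset.mem_univ j)]
    have hzero : ∑ i ∈ Finset.univ.erase j, δ i = 0 := by omega
    have := Finset.sum_eq_zero_iff.mp hzero k (by simp [hkj])
    exact this

/-- "order at least `k`". -/
def OrdGE (k : ℕ) (f : MvPowerSeries (Fin n) F) : Prop :=
  ∀ δ : Fin n →₀ ℕ, δ.degree < k → coeff δ f = 0

lemma ordGE_zero (f : MvPowerSeries (Fin n) F) : OrdGE 0 f := fun _ h => absurd h (Nat.not_lt_zero _)

lemma ordGE_mono {k l : ℕ} {f : MvPowerSeries (Fin n) F} (h : OrdGE k f) (hl : l ≤ k) :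
    OrdGE l f := fun δ hδ => h δ (lt_of_lt_of_le hδ hl)

lemma ordGE_add {k : ℕ} {f g : MvPowerSeries (Fin n) F} (hf : OrdGE k f) (hg : OrdGE k g) :
    OrdGE k (f + g) := fun δ hδ => by rw [map_add, hf δ hδ, hg δ hδ, add_zero]

lemma ordGE_mul {a b : ℕ} {f g : MvPowerSeries (Fin n) F} (hf : OrdGE a f) (hg : OrdGE b g) :
    OrdGE (a + b) (f * g) := by
  intro δ hδ
  rw [coeff_mul]
  apply Finset.sum_eq_zero
  intro p hp
  rw [Finset.HasAntidiagonal.mem_antidiagonal] at hp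
  have hdeg : p.1.degree + p.2.degree = δ.degree := by rw [← degree_add, hp]
  rcases lt_or_ge p.1.degree a with h1 | h1
  · rw [hf _ h1, zero_mul]
  · have h2 : p.2.degree < b := by omega
    rw [hg _ h2, mul_zero]

/-- A pair of power series of order ≥ a agreeing up to degree `a`. -/
def Trip (a : ℕ) (f f' : MvPowerSeries (Fin n) F) : Prop :=
  OrdGE a f ∧ OrdGE a f' ∧ OrdGE (a + 1) (f - f')

lemma Trip.mul {a b : ℕ} {f f' g g' : MvPowerSeries (Fin n) F}
    (hf : Trip a f f') (hg : Trip b g g') : Trip (a + b) (f * g) (f' * g') := by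
  obtain ⟨hf1, hf2, hf3⟩ := hf
  obtain ⟨hg1, hg2, hg3⟩ := hg
  refine ⟨ordGE_mul hf1 hg1, ordGE_mul hf2 hg2, ?_⟩
  have : f * g - f' * g' = f * (g - g') + (f - f') * g' := by ring
  rw [this]
  exact ordGE_add (ordGE_mono (ordGE_mul hf1 hg3) (by omega))
    (ordGE_mono (ordGE_mul hf3 hg2) (by omega))

lemma Trip.one : Trip (n := n) (F := F) 0 1 1 :=
  ⟨ordGE_zero _, ordGE_zero _, fun δ _ => by simp⟩

lemma Trip.pow {a : ℕ} {f f' : MvPowerSeries (Fin n) F} (h : Trip a f f') (m : ℕ) :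
    Trip (a * m) (f ^ m) (f' ^ m) := by
  induction m with
  | zero => simpa using Trip.one
  | succ m ih =>
    rw [pow_succ, pow_succ, Nat.mul_succ]
    exact ih.mul h

lemma Trip.prod {a : Fin n → ℕ} {f f' : Fin n → MvPowerSeries (Fin n) F}
    (h : ∀ i, Trip (a i) (f i) (f' i)) (s : Finset (Fin n)) :
    Trip (∑ i ∈ s, a i) (∏ i ∈ s, f i) (∏ i ∈ s, f' i) := by
  classical
  refine Finset.induction_on s ?_ ?_
  · simpa using Trip.one
  · intro x s hxs ih
    rw [Finset.sum_insert hxs, Finset.prod_insert hxs, Finset.prod_insert hxs]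
    exact (h x).mul ih

section MatrixPart

variable (A : Matrix (Fin n) (Fin n) F)

/-- The linear form `Σ_j A i j • X j` as a polynomial. -/
noncomputable def Lpoly (i : Fin n) : MvPolynomial (Fin n) F :=
  ∑ j, MvPolynomial.C (A i j) * MvPolynomial.X j

/-- Top-degree composition matrix entries. -/
noncomputable def Mmat (α γ : Fin n →₀ ℕ) : F :=
  MvPolynomial.coeff γ (∏ i, (Lpoly A i) ^ (α i))

lemma Lpoly_homog (i : Fin n) : (Lpoly A i).IsHomogeneous 1 :=
  MvPolynomial.IsHomogeneous.sum _ _ _ fun j _ => MvPolynomial.isHomogeneous_C_mul_X _ _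

lemma prod_Lpoly_homog (α : Fin n →₀ ℕ) :
    (∏ i, (Lpoly A i) ^ (α i)).IsHomogeneous α.degree := by
  rw [degree_eq_sum]
  exact MvPolynomial.IsHomogeneous.prod _ _ _ fun i _ => by
    simpa using (Lpoly_homog A i).pow (α i)

lemma Mmat_eq_zero {α γ : Fin n →₀ ℕ} (h : γ.degree ≠ α.degree) : Mmat A α γ = 0 :=
  (prod_Lpoly_homog A α).coeff_eq_zero h

lemma bind_Lpoly (B : Matrix (Fin n) (Fin n) F) (j : Fin n) :
    MvPolynomial.bind₁ (Lpoly A) (Lpoly B j) = Lpoly (B * A) j := by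
  unfold Lpoly
  rw [map_sum]
  simp only [map_mul, MvPolynomial.bind₁_C_right, MvPolynomial.bind₁_X_right]
  simp only [Finset.mul_sum, ← mul_assoc, ← map_mul]
  rw [Finset.sum_comm]
  refine Finset.sum_congr rfl fun m _ => ?_
  rw [← Finset.sum_mul, ← map_sum, Matrix.mul_apply]

lemma Lpoly_one (j : Fin n) : Lpoly (1 : Matrix (Fin n) (Fin n) F) j = MvPolynomial.X j := by
  unfold Lpoly
  rw [Finset.sum_eq_single j]
  · simp [Matrix.one_apply_eq]
  · intro m _ hm
    rw [Matrix.one_apply_ne (Ne.symm hm)]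
    simp
  · intro h; exact absurd (Finset.mem_univ j) h

/-- Surjectivity of the top-degree block: for any degree `d` and target
coefficients `b`, there is a finitely supported `u` concentrated in degree `d`
with `Σ_α u_α M_{αγ} = b γ` for all `γ` of degree `d`. -/
lemma surj (hA : IsUnit A) (d : ℕ) (b : (Fin n →₀ ℕ) → F) :
    ∃ u : (Fin n →₀ ℕ) →₀ F, (∀ α ∈ u.support, α.degree = d) ∧
      ∀ γ : Fin n →₀ ℕ, γ.degree = d → (u.sum fun α v => v * Mmat A α γ) = b γ := by
  classical
  obtain ⟨W, hW⟩ := hA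
  set B : Matrix (Fin n) (Fin n) F := ((W⁻¹ : (Matrix (Fin n) (Fin n) F)ˣ) : Matrix (Fin n) (Fin n) F) with hB
  have hBA : B * A = 1 := by
    rw [hB, ← hW, ← Units.val_mul]
    simp
  set ζ : Fin n →₀ ℕ := Finsupp.equivFunOnFinite.symm (fun _ => d) with hζ
  have hζ_apply : ∀ j, ζ j = d := fun j => rfl
  set T : Finset (Fin n →₀ ℕ) := (Finset.Iic ζ).filter (fun γ => γ.degree = d) with hT
  set q : MvPolynomial (Fin n) F := ∑ γ ∈ T, MvPolynomial.monomial γ (b γ) with hq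
  set p : MvPolynomial (Fin n) F := MvPolynomial.bind₁ (Lpoly B) q with hp
  have hpq : MvPolynomial.bind₁ (Lpoly A) p = q := by
    rw [hp, MvPolynomial.bind₁_bind₁]
    have h1 : (fun j => MvPolynomial.bind₁ (Lpoly A) (Lpoly B j)) =
        (MvPolynomial.X : Fin n → MvPolynomial (Fin n) F) := by
      funext j
      rw [bind_Lpoly, hBA, Lpoly_one]
    rw [h1, MvPolynomial.bind₁_X_left]
    rfl
  have key : ∀ γ : Fin n →₀ ℕ,
      MvPolynomial.coeff γ q = ∑ α ∈ p.support, MvPolynomial.coeff α p * Mmat A α γ := by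
    intro γ
    conv_lhs => rw [← hpq, p.as_sum, map_sum]
    rw [MvPolynomial.coeff_sum]
    refine Finset.sum_congr rfl fun α _ => ?_
    rw [MvPolynomial.bind₁_monomial, MvPolynomial.coeff_C_mul, Mmat]
    congr 2
    exact Finset.prod_subset (Finset.subset_univ _) fun i _ hi => by
      simp [Finsupp.notMem_support_iff.mp hi]
  have hcq : ∀ γ : Fin n →₀ ℕ, γ.degree = d → MvPolynomial.coeff γ q = b γ := by
    intro γ hγ
    have hγT : γ ∈ T := by
      rw [hT, Finset.mem_filter, Finset.mem_Iic]
      refine ⟨fun j => ?_, hγ⟩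
      rw [hζ_apply j, ← hγ]
      exact Finsupp.le_degree j γ
    rw [hq, MvPolynomial.coeff_sum, Finset.sum_eq_single γ]
    · rw [MvPolynomial.coeff_monomial, if_pos rfl]
    · intro γ' _ hne
      rw [MvPolynomial.coeff_monomial, if_neg hne]
    · intro h; exact absurd hγT h
  set uf : (Fin n →₀ ℕ) →₀ F := Finsupp.onFinset (p.support.filter fun α => α.degree = d)
      (fun α => if α.degree = d then MvPolynomial.coeff α p else 0)
      (fun α h => by
        rw [Finset.mem_filter]
        by_cases hd : α.degree = d
        · refine ⟨MvPolynomial.mem_support_iff.mpr ?_, hd⟩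
          simpa [hd] using h
        · simp [hd] at h) with huf
  refine ⟨uf, ?_, ?_⟩
  · intro α hα
    have hne := Finsupp.mem_support_iff.mp hα
    by_contra hd
    have h0 : uf α = 0 := by rw [huf]; simp [hd]
    exact hne h0
  · intro γ hγ
    have hsub : uf.support ⊆ p.support.filter fun α => α.degree = d :=
      Finsupp.support_onFinset_subset
    have hreq : (uf.sum fun α v => v * Mmat A α γ)
        = ∑ α ∈ p.support.filter (fun α => α.degree = d), uf α * Mmat A α γ :=
      Finsupp.sum_of_support_subset _ hsub _ (fun α _ => zero_mul _)
    have step1 : ∑ α ∈ p.support.filter (fun α => α.degree = d), uf α * Mmat A α γ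
        = ∑ α ∈ p.support.filter (fun α => α.degree = d),
        MvPolynomial.coeff α p * Mmat A α γ := by
      refine Finset.sum_congr rfl fun α hα => ?_
      have hd := (Finset.mem_filter.mp hα).2
      rw [huf]
      simp [hd]
    have step2 : ∑ α ∈ p.support.filter (fun α => α.degree = d),
        MvPolynomial.coeff α p * Mmat A α γ
        = ∑ α ∈ p.support, MvPolynomial.coeff α p * Mmat A α γ := by
      refine Finset.sum_subset (Finset.filter_subset _ _) fun α hα hα' => ?_
      have hd : α.degree ≠ d := fun h => hα' (Finset.mem_filter.mpr ⟨hα, h⟩)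
      rw [Mmat_eq_zero A (by rw [hγ]; exact fun h => hd h.symm), mul_zero]
    rw [hreq, step1, step2, ← key, hcq γ hγ]

end MatrixPart

section GPart

variable (G : Fin n → MvPowerSeries (Fin n) F)

/-- `γ`-coefficient of `G^α`. -/
noncomputable def Mser (α γ : Fin n →₀ ℕ) : F :=
  coeff γ (∏ i, (G i) ^ (α i))

/-- The matrix of linear coefficients of `G`. -/
noncomputable def matA : Matrix (Fin n) (Fin n) F :=
  Matrix.of fun i j => coeff (Finsupp.single j 1) (G i)

lemma trip_G (hG : ∀ i, coeff 0 (G i) = 0) (i : Fin n) :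
    Trip 1 (G i) ((Lpoly (matA G) i : MvPolynomial (Fin n) F) : MvPowerSeries (Fin n) F) := by
  classical
  have hL : ∀ δ : Fin n →₀ ℕ,
      coeff δ ((Lpoly (matA G) i : MvPolynomial (Fin n) F) : MvPowerSeries (Fin n) F)
      = ∑ j, matA G i j * (if Finsupp.single j 1 = δ then 1 else 0) := by
    intro δ
    rw [MvPolynomial.coeff_coe, Lpoly, MvPolynomial.coeff_sum]
    refine Finset.sum_congr rfl fun j _ => ?_
    rw [MvPolynomial.coeff_C_mul, MvPolynomial.coeff_X']
  refine ⟨?_, ?_, ?_⟩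
  · intro δ hδ
    have : δ = 0 := (Finsupp.degree_eq_zero_iff δ).mp (by omega)
    rw [this]; exact hG i
  · intro δ hδ
    have hδ0 : δ = 0 := (Finsupp.degree_eq_zero_iff δ).mp (by omega)
    rw [hδ0, hL]
    apply Finset.sum_eq_zero
    intro j _
    rw [if_neg, mul_zero]
    intro h
    have := DFunLike.congr_fun h j
    simp at this
  · intro δ hδ
    rw [map_sub]
    rcases Nat.lt_or_ge δ.degree 1 with h1 | h1
    · have hδ0 : δ = 0 := (Finsupp.degree_eq_zero_iff δ).mp (by omega)
      rw [hδ0, hG i, hL, zero_sub, neg_eq_zero]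
      apply Finset.sum_eq_zero
      intro j _
      rw [if_neg, mul_zero]
      intro h
      have := DFunLike.congr_fun h j
      simp at this
    · have hδ1 : δ.degree = 1 := by omega
      obtain ⟨j, rfl⟩ := degree_one_single hδ1
      rw [hL]
      rw [Finset.sum_eq_single j]
      · rw [if_pos rfl, mul_one]
        simp [matA]
      · intro k _ hk
        rw [if_neg, mul_zero]
        intro h
        rcases (Finsupp.single_eq_single_iff _ _ _ _).mp h with ⟨h1, _⟩ | ⟨h1, _⟩
        · exact hk h1
        · exact one_ne_zero h1
      · intro h; exact absurd (Finset.mem_univ j) h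

lemma trip_prod_G (hG : ∀ i, coeff 0 (G i) = 0) (α : Fin n →₀ ℕ) :
    Trip α.degree (∏ i, (G i) ^ (α i))
      (∏ i, ((Lpoly (matA G) i : MvPolynomial (Fin n) F) : MvPowerSeries (Fin n) F) ^ (α i)) := by
  rw [degree_eq_sum]
  exact Trip.prod (fun i => by simpa using (trip_G G hG i).pow (α i)) Finset.univ

lemma Mser_eq_zero (hG : ∀ i, coeff 0 (G i) = 0) {α γ : Fin n →₀ ℕ} (h : γ.degree < α.degree) : Mser G α γ = 0 :=
  (trip_prod_G G hG α).1 γ h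

lemma coe_prod_pow (α : Fin n →₀ ℕ) :
    ((∏ i, (Lpoly (matA G) i) ^ (α i) : MvPolynomial (Fin n) F) : MvPowerSeries (Fin n) F)
      = ∏ i, ((Lpoly (matA G) i : MvPolynomial (Fin n) F) : MvPowerSeries (Fin n) F) ^ (α i) := by
  rw [← MvPolynomial.coeToMvPowerSeries.ringHom_apply, map_prod]
  refine Finset.prod_congr rfl fun i _ => ?_
  rw [map_pow, MvPolynomial.coeToMvPowerSeries.ringHom_apply]

lemma Mser_eq_Mmat (hG : ∀ i, coeff 0 (G i) = 0) {α γ : Fin n →₀ ℕ} (h : γ.degree = α.degree) :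
    Mser G α γ = Mmat (matA G) α γ := by
  have h3 := (trip_prod_G G hG α).2.2 γ (by omega)
  rw [map_sub, sub_eq_zero] at h3
  rw [Mser, h3, ← coe_prod_pow, MvPolynomial.coeff_coe, Mmat]

lemma coeff_comp (f : MvPowerSeries (Fin n) F) (γ : Fin n →₀ ℕ) :
    coeff γ (comp f G) = ∑ᶠ α : Fin n →₀ ℕ, coeff α f * Mser G α γ := rfl

/-- The main construction: any series with zero constant term is in the image
of composition with `G`. -/
lemma solve (hG : ∀ i, coeff 0 (G i) = 0) (hJ : IsUnit (matA G)) (t : MvPowerSeries (Fin n) F) (ht : coeff 0 t = 0) :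
    ∃ h : MvPowerSeries (Fin n) F, coeff 0 h = 0 ∧ comp h G = t := by
  classical
  choose U hU1 hU2 using surj (matA G) hJ
  let step : ℕ → ((Fin n →₀ ℕ) →₀ F) → ((Fin n →₀ ℕ) →₀ F) := fun d Pd =>
    Pd + U d (fun γ => coeff γ t - Pd.sum fun α v => v * Mser G α γ)
  let P : ℕ → ((Fin n →₀ ℕ) →₀ F) := fun d => Nat.rec 0 step d
  have hP0 : P 0 = 0 := rfl
  have hPs : ∀ d, P (d + 1) =
      P d + U d (fun γ => coeff γ t - (P d).sum fun α v => v * Mser G α γ) := fun d => rfl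
  have inv1 : ∀ d, ∀ α ∈ (P d).support, α.degree < d := by
    intro d
    induction d with
    | zero => intro α hα; rw [hP0] at hα; simp at hα
    | succ d ih =>
      intro α hα
      rw [hPs d] at hα
      rcases Finset.mem_union.mp (Finsupp.support_add hα) with h | h
      · exact (ih α h).trans (Nat.lt_succ_self d)
      · rw [hU1 _ _ α h]; exact Nat.lt_succ_self d
  have sum_add : ∀ (f g : (Fin n →₀ ℕ) →₀ F) (γ : Fin n →₀ ℕ),
      ((f + g).sum fun α v => v * Mser G α γ)
      = (f.sum fun α v => v * Mser G α γ) + (g.sum fun α v => v * Mser G α γ) := by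
    intro f g γ
    exact Finsupp.sum_add_index' (fun α => zero_mul _) (fun α b₁ b₂ => add_mul _ _ _)
  have inv2 : ∀ d (γ : Fin n →₀ ℕ), γ.degree < d →
      ((P d).sum fun α v => v * Mser G α γ) = coeff γ t := by
    intro d
    induction d with
    | zero => intro γ hγ; omega
    | succ d ih =>
      intro γ hγ
      rw [hPs d, sum_add]
      set b : (Fin n →₀ ℕ) → F :=
        fun γ => coeff γ t - (P d).sum fun α v => v * Mser G α γ with hb
      rcases Nat.lt_or_ge γ.degree d with h | h
      · rw [ih γ h]
        have hz : ((U d b).sum fun α v => v * Mser G α γ) = 0 := by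
          apply Finset.sum_eq_zero
          intro α hα
          show (U d b) α * Mser G α γ = 0
          have hz0 : Mser G α γ = 0 := Mser_eq_zero G hG (by rw [hU1 d b α hα]; omega)
          rw [hz0, mul_zero]
        rw [hz, add_zero]
      · have hde : γ.degree = d := by omega
        have hMM : ((U d b).sum fun α v => v * Mser G α γ)
            = ((U d b).sum fun α v => v * Mmat (matA G) α γ) := by
          apply Finsupp.sum_congr
          intro α hα
          show (U d b) α * Mser G α γ = (U d b) α * Mmat (matA G) α γ
          rw [Mser_eq_Mmat G hG (by rw [hde, hU1 d b α hα])]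
        rw [hMM, hU2 d b γ hde, hb]
        ring
  have stab : ∀ d e, e ≤ d → ∀ α : Fin n →₀ ℕ, α.degree < e → P d α = P e α := by
    intro d
    induction d with
    | zero => intro e he α _; interval_cases e; rfl
    | succ d ih =>
      intro e he α hα
      rcases Nat.eq_or_lt_of_le he with rfl | h
      · rfl
      · have he' : e ≤ d := by omega
        rw [hPs d, Finsupp.add_apply]
        have hz : U d (fun γ => coeff γ t - (P d).sum fun α v => v * Mser G α γ) α = 0 := by
          apply Finsupp.notMem_support_iff.mp
          intro hmem
          have := hU1 _ _ α hmem
          omega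
        rw [hz, add_zero, ih e he' α hα]
  set h : MvPowerSeries (Fin n) F := fun γ => P (γ.degree + 1) γ with hh
  have hcoeff : ∀ γ : Fin n →₀ ℕ, coeff γ h = P (γ.degree + 1) γ := fun γ => rfl
  have hcomp : ∀ γ : Fin n →₀ ℕ,
      coeff γ (comp h G) = ((P (γ.degree + 1)).sum fun α v => v * Mser G α γ) := by
    intro γ
    set d := γ.degree with hd
    rw [coeff_comp]
    set s : Finset (Fin n →₀ ℕ) := Finset.Iic (Finsupp.equivFunOnFinite.symm fun _ => d) with hs
    have hmem : ∀ α : Fin n →₀ ℕ, α.degree ≤ d → α ∈ s := by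
      intro α hαd
      rw [hs, Finset.mem_Iic]
      intro j
      exact (Finsupp.le_degree j α).trans hαd
    rw [finsum_eq_sum_of_support_subset _ (s := s) ?side]
    case side =>
      intro α hα
      rw [Function.mem_support] at hα
      by_contra hns
      have hdα : d < α.degree := by
        by_contra h'
        exact hns (Finset.mem_coe.mpr (hmem α (by omega)))
      have : coeff α h * Mser G α γ = 0 := by
        rw [Mser_eq_zero G hG hdα, mul_zero]
      exact hα this
    · have hreq : ((P (d + 1)).sum fun α v => v * Mser G α γ)
          = ∑ α ∈ s, P (d + 1) α * Mser G α γ :=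
        Finsupp.sum_of_support_subset (P (d + 1))
          (fun α hα => hmem α (by have := inv1 (d + 1) α hα; omega)) _ (fun α _ => zero_mul _)
      rw [hreq]
      refine Finset.sum_congr rfl fun α _ => ?_
      rcases le_or_gt α.degree d with h1 | h1
      · rw [hcoeff, stab (d + 1) (α.degree + 1) (by omega) α (by omega)]
      · rw [Mser_eq_zero G hG (by omega), mul_zero, mul_zero]
  have hfinal : ∀ γ : Fin n →₀ ℕ, coeff γ (comp h G) = coeff γ t := by
    intro γ
    rw [hcomp γ, inv2 (γ.degree + 1) γ (Nat.lt_succ_self _)]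
  refine ⟨h, ?_, MvPowerSeries.ext hfinal⟩
  have h00 : coeff 0 h = P 1 0 := by
    rw [hcoeff]
    norm_num [map_zero]
  have hi2 := inv2 1 0 (by rw [map_zero]; omega)
  have hsub : (P 1).support ⊆ {(0 : Fin n →₀ ℕ)} := by
    intro α hα
    have := inv1 1 α hα
    rw [Finset.mem_singleton]
    exact (Finsupp.degree_eq_zero_iff α).mp (by omega)
  have hreq2 : ((P 1).sum fun α v => v * Mser G α 0)
      = ∑ α ∈ ({0} : Finset (Fin n →₀ ℕ)), P 1 α * Mser G α 0 :=
    Finsupp.sum_of_support_subset _ hsub _ (fun α _ => zero_mul _)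
  rw [hreq2, Finset.sum_singleton] at hi2
  have hM1 : Mser G (0 : Fin n →₀ ℕ) (0 : Fin n →₀ ℕ) = 1 := by
    rw [Mser]
    simp [MvPowerSeries.coeff_one]
  rw [hM1, mul_one, ht] at hi2
  rw [h00, hi2]

end GPart

end CompInvAux

/-- If the matrix of linear coefficients `J_G(θ)` of a nonunit vector `G` is
invertible, then `G` has a left composition inverse `H` consisting of
nonunit power series with `H ∘ G = (x₁,…,xₙ)`. -/
theorem comp_inverse_exists {F : Type*} [Field F] {n : ℕ}
    (G : Fin n → MvPowerSeries (Fin n) F)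
    (hG : ∀ i, coeff 0 (G i) = 0)
    (hJ : IsUnit (Matrix.of fun i j => coeff (Finsupp.single j 1) (G i))) :
    ∃ H : Fin n → MvPowerSeries (Fin n) F,
      (∀ i, coeff 0 (H i) = 0) ∧ ∀ i, comp (H i) G = MvPowerSeries.X i := by
  have hJ' : IsUnit (CompInvAux.matA G) := hJ
  choose H h1 h2 using fun i =>
    CompInvAux.solve G hG hJ' (MvPowerSeries.X i) (MvPowerSeries.coeff_zero_X i)
  exact ⟨H, h1, h2⟩
end

section
/- A vector G = (g₁,…,gₙ) of formal power series in n variables with zero constant terms has a two-sided composition inverse (a vector H of nonunit power series with H∘G = G∘H = I) if and only if det(J_G(θ)) ≠ 0; moreover, when it exists, the composition inverse is unique. -/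
open MvPowerSeries

open Finsupp

namespace CompAux

variable {F : Type*} [Field F] {n : ℕ}

abbrev Mv (F : Type*) [Field F] (n : ℕ) := MvPowerSeries (Fin n) F

/-- total degree of an exponent -/
def dg (γ : Fin n →₀ ℕ) : ℕ := ∑ j, γ j

lemma dg_add (a b : Fin n →₀ ℕ) : dg (a + b) = dg a + dg b := by
  simp [dg, Finset.sum_add_distrib]

lemma le_dg (j : Fin n) (γ : Fin n →₀ ℕ) : γ j ≤ dg γ :=
  Finset.single_le_sum (fun _ _ => Nat.zero_le _) (Finset.mem_univ j)

lemma dg_eq_zero_iff (γ : Fin n →₀ ℕ) : dg γ = 0 ↔ γ = 0 := by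
  constructor
  · intro h
    ext j
    have h1 := le_dg j γ
    simp only [h] at h1
    exact Nat.le_zero.mp h1
  · rintro rfl; simp [dg]

lemma dg_single (j : Fin n) (k : ℕ) : dg (single j k) = k := by
  simp [dg, Finsupp.single_apply]

lemma dg_eq_one (α : Fin n →₀ ℕ) (h : dg α = 1) : ∃ j, α = single j 1 := by
  have hne : α ≠ 0 := by
    intro h0; rw [h0] at h; simp [dg] at h
  obtain ⟨j, hj⟩ := Finsupp.ne_iff.mp hne
  simp only [coe_zero, Pi.zero_apply] at hj
  refine ⟨j, ?_⟩
  have hj1 : α j = 1 := le_antisymm (h ▸ le_dg j α) (Nat.one_le_iff_ne_zero.mpr hj)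
  ext i
  rcases eq_or_ne i j with rfl | hij
  · simp [hj1]
  · simp only [Finsupp.single_apply, if_neg (Ne.symm hij)]
    by_contra hi
    have h2 : 2 ≤ dg α := by
      have : single i (α i) + single j (α j) ≤ α := by
        rw [Finsupp.le_def]
        intro k
        rcases eq_or_ne k i with rfl | hki
        · simp [Finsupp.single_apply, Ne.symm hij]
        · rcases eq_or_ne k j with rfl | hkj
          · simp [Finsupp.single_apply, hij, Ne.symm hij]
          · simp [Finsupp.single_apply, Ne.symm hki, Ne.symm hkj]
      have h3 : dg (single i (α i) + single j (α j)) ≤ dg α :=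
        Finset.sum_le_sum (fun k (_ : k ∈ Finset.univ) => this k)
      rw [dg_add, dg_single, dg_single, hj1] at h3
      omega
    omega

/-- the finset of exponents all of whose entries are at most `d` -/
noncomputable def Sb (d : ℕ) : Finset (Fin n →₀ ℕ) := Finset.Iic (equivFunOnFinite.symm fun _ => d)

lemma mem_Sb {d : ℕ} {α : Fin n →₀ ℕ} : α ∈ (Sb d : Finset (Fin n →₀ ℕ)) ↔ ∀ j, α j ≤ d := by
  simp [Sb, Finset.mem_Iic, Finsupp.le_def]

lemma mem_Sb_of_dg_le {d : ℕ} {α : Fin n →₀ ℕ} (h : dg α ≤ d) : α ∈ (Sb d : Finset (Fin n →₀ ℕ)) :=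
  mem_Sb.mpr fun j => le_trans (le_dg j α) h

end CompAux

namespace CompAux

variable {F : Type*} [Field F] {n : ℕ}

lemma coeff_mul_order {f g : Mv F n} {a b : ℕ}
    (hf : ∀ δ, dg δ < a → coeff δ f = 0) (hg : ∀ ε, dg ε < b → coeff ε g = 0)
    {γ : Fin n →₀ ℕ} (hγ : dg γ < a + b) : coeff γ (f * g) = 0 := by
  classical
  rw [MvPowerSeries.coeff_mul]
  apply Finset.sum_eq_zero
  rintro ⟨δ, ε⟩ hp
  rw [Finset.HasAntidiagonal.mem_antidiagonal] at hp
  have hde : dg δ + dg ε = dg γ := by rw [← dg_add, hp]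
  rcases lt_or_ge (dg δ) a with h | h
  · rw [hf δ h, zero_mul]
  · rw [hg ε (by omega), mul_zero]

lemma prod_pow_add (H : Fin n → Mv F n) (a b : Fin n →₀ ℕ) :
    (∏ i, H i ^ (a + b) i) = (∏ i, H i ^ a i) * ∏ i, H i ^ b i := by
  rw [← Finset.prod_mul_distrib]
  exact Finset.prod_congr rfl fun i _ => by rw [Finsupp.add_apply, pow_add]

lemma prod_pow_single (H : Fin n → Mv F n) (j : Fin n) :
    (∏ i, H i ^ (Finsupp.single j 1 : Fin n →₀ ℕ) i) = H j := by
  rw [Finset.prod_eq_single j]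
  · simp
  · intro i _ hij; simp [Finsupp.single_apply, Ne.symm hij]
  · simp

lemma exists_split {α : Fin n →₀ ℕ} (h : dg α ≠ 0) :
    ∃ (j : Fin n) (α' : Fin n →₀ ℕ), α = α' + Finsupp.single j 1 ∧ dg α' + 1 = dg α := by
  have hα : α ≠ 0 := fun h0 => h (by rw [h0, dg_eq_zero_iff])
  obtain ⟨j, hj⟩ := Finsupp.support_nonempty_iff.mpr hα
  rw [Finsupp.mem_support_iff] at hj
  refine ⟨j, α - Finsupp.single j 1, ?_, ?_⟩
  · ext i
    rcases eq_or_ne i j with rfl | hij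
    · simp only [Finsupp.add_apply, Finsupp.tsub_apply, Finsupp.single_apply, eq_self_iff_true, if_true]
      omega
    · simp [Finsupp.add_apply, Finsupp.tsub_apply, Finsupp.single_apply, Ne.symm hij]
  · have : α = (α - Finsupp.single j 1) + Finsupp.single j 1 := by
      ext i
      rcases eq_or_ne i j with rfl | hij
      · simp only [Finsupp.add_apply, Finsupp.tsub_apply, Finsupp.single_apply, eq_self_iff_true, if_true]
        omega
      · simp [Finsupp.add_apply, Finsupp.tsub_apply, Finsupp.single_apply, Ne.symm hij]
    conv_rhs => rw [this]
    rw [dg_add, dg_single]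

lemma coeff_prod_pow_order_aux {H : Fin n → Mv F n} (hH : ∀ i, coeff 0 (H i) = 0) :
    ∀ (s : ℕ) (α : Fin n →₀ ℕ), dg α ≤ s → ∀ γ, dg γ < dg α →
      coeff γ (∏ i, H i ^ α i) = 0 := by
  intro s
  induction s with
  | zero => intro α hα γ hγ; omega
  | succ s ih =>
    intro α hα γ hγ
    have h0 : dg α ≠ 0 := by omega
    obtain ⟨j, α', rfl, hdg⟩ := exists_split h0
    rw [prod_pow_add, prod_pow_single]
    classical
    rw [MvPowerSeries.coeff_mul]
    apply Finset.sum_eq_zero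
    rintro ⟨δ, ε⟩ hp
    rw [Finset.HasAntidiagonal.mem_antidiagonal] at hp
    have hde : dg δ + dg ε = dg γ := by rw [← dg_add, hp]
    rcases eq_or_ne ε 0 with rfl | hε
    · rw [hH j, mul_zero]
    · have hε1 : 1 ≤ dg ε := by
        rcases Nat.eq_zero_or_pos (dg ε) with h | h
        · exact absurd ((dg_eq_zero_iff ε).mp h) hε
        · omega
      rw [ih α' (by omega) δ (by omega), zero_mul]

lemma coeff_prod_pow_order {H : Fin n → Mv F n} (hH : ∀ i, coeff 0 (H i) = 0)
    {α γ : Fin n →₀ ℕ} (hγ : dg γ < dg α) : coeff γ (∏ i, H i ^ α i) = 0 :=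
  coeff_prod_pow_order_aux hH (dg α) α le_rfl γ hγ

lemma coeff_comp {H : Fin n → Mv F n} (hH : ∀ i, coeff 0 (H i) = 0)
    (f : Mv F n) {γ : Fin n →₀ ℕ} {d : ℕ} (hd : dg γ ≤ d) :
    coeff γ (comp f H) =
      ∑ α ∈ (Sb d : Finset (Fin n →₀ ℕ)), coeff α f * coeff γ (∏ i, H i ^ α i) := by
  have : coeff γ (comp f H) =
      ∑ᶠ α : Fin n →₀ ℕ, coeff α f * coeff γ (∏ i, (H i) ^ (α i)) := rfl
  rw [this]
  apply finsum_eq_sum_of_support_subset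
  intro α hα
  simp only [Function.mem_support] at hα
  have : ¬ (dg γ < dg α) := fun h => hα (by rw [coeff_prod_pow_order hH h, mul_zero])
  exact Finset.mem_coe.mpr (mem_Sb_of_dg_le (by omega))

lemma Sb_zero : (Sb 0 : Finset (Fin n →₀ ℕ)) = {0} := by
  ext α
  simp only [mem_Sb, Finset.mem_singleton]
  constructor
  · intro h; ext j; exact Nat.le_zero.mp (h j)
  · rintro rfl; simp

lemma coeff_zero_comp {H : Fin n → Mv F n} (hH : ∀ i, coeff 0 (H i) = 0) (f : Mv F n) :
    coeff 0 (comp f H) = coeff 0 f := by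
  rw [coeff_comp hH f (by simp [dg] : dg (0 : Fin n →₀ ℕ) ≤ 0), Sb_zero,
    Finset.sum_singleton]
  simp

end CompAux

namespace CompAux

variable {F : Type*} [Field F] {n : ℕ}

lemma comp_add {H : Fin n → Mv F n} (hH : ∀ i, coeff 0 (H i) = 0) (f g : Mv F n) :
    comp (f + g) H = comp f H + comp g H := by
  ext γ
  rw [map_add, coeff_comp hH _ (le_refl (dg γ)), coeff_comp hH f (le_refl (dg γ)),
    coeff_comp hH g (le_refl (dg γ)), ← Finset.sum_add_distrib]
  apply Finset.sum_congr rfl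
  intro α _
  rw [map_add, add_mul]

lemma comp_smul {H : Fin n → Mv F n} (hH : ∀ i, coeff 0 (H i) = 0) (c : F) (f : Mv F n) :
    comp (c • f) H = c • comp f H := by
  ext γ
  rw [LinearMap.map_smul, smul_eq_mul, coeff_comp hH _ (le_refl (dg γ)),
    coeff_comp hH f (le_refl (dg γ)), Finset.mul_sum]
  apply Finset.sum_congr rfl
  intro α _
  rw [LinearMap.map_smul, smul_eq_mul, mul_assoc]

lemma comp_one {H : Fin n → Mv F n} (hH : ∀ i, coeff 0 (H i) = 0) :
    comp (1 : Mv F n) H = 1 := by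
  classical
  ext γ
  rw [coeff_comp hH _ (le_refl (dg γ))]
  have : ∀ α ∈ (Sb (dg γ) : Finset (Fin n →₀ ℕ)),
      coeff α (1 : Mv F n) * coeff γ (∏ i, H i ^ α i) =
      if α = 0 then coeff γ (∏ i, H i ^ α i) else 0 := by
    intro α _
    rw [MvPowerSeries.coeff_one]
    split_ifs <;> simp
  rw [Finset.sum_congr rfl this, Finset.sum_ite_eq' _ (0 : Fin n →₀ ℕ)]
  rw [if_pos (mem_Sb.mpr fun j => by simp)]
  simp

lemma comp_X {H : Fin n → Mv F n} (hH : ∀ i, coeff 0 (H i) = 0) (j : Fin n) :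
    comp (MvPowerSeries.X j) H = H j := by
  classical
  ext γ
  rw [coeff_comp hH _ (Nat.le_succ (dg γ))]
  have : ∀ α ∈ (Sb (dg γ + 1) : Finset (Fin n →₀ ℕ)),
      coeff α (MvPowerSeries.X j : Mv F n) * coeff γ (∏ i, H i ^ α i) =
      if α = Finsupp.single j 1 then coeff γ (∏ i, H i ^ α i) else 0 := by
    intro α _
    rw [MvPowerSeries.coeff_X]
    split_ifs <;> simp
  rw [Finset.sum_congr rfl this, Finset.sum_ite_eq' _ (Finsupp.single j 1)]
  rw [if_pos (mem_Sb.mpr fun i => by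
    rcases eq_or_ne i j with rfl | hij
    · simp
    · simp [Finsupp.single_apply, Ne.symm hij])]
  rw [prod_pow_single]

lemma comp_mul {H : Fin n → Mv F n} (hH : ∀ i, coeff 0 (H i) = 0) (f g : Mv F n) :
    comp (f * g) H = comp f H * comp g H := by
  classical
  ext γ
  set d := dg γ with hd
  set S : Finset (Fin n →₀ ℕ) := Sb d with hS
  set P : (Fin n →₀ ℕ) → Mv F n := fun β => ∏ i, H i ^ β i with hP
  set Fn : (Fin n →₀ ℕ) × (Fin n →₀ ℕ) → F :=
    fun p => coeff p.1 f * coeff p.2 g * coeff γ (P (p.1 + p.2)) with hFn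
  have hdisj : (↑S : Set (Fin n →₀ ℕ)).PairwiseDisjoint Finset.HasAntidiagonal.antidiagonal := by
    intro a _ b _ hab
    simp only [Function.onFun, Finset.disjoint_left]
    intro p hpa hpb
    rw [Finset.HasAntidiagonal.mem_antidiagonal] at hpa hpb
    exact hab (hpa ▸ hpb)
  have hL : coeff γ (comp (f * g) H) = ∑ p ∈ S.biUnion Finset.HasAntidiagonal.antidiagonal, Fn p := by
    rw [coeff_comp hH _ (le_refl d), Finset.sum_biUnion hdisj]
    apply Finset.sum_congr rfl
    intro β _
    rw [MvPowerSeries.coeff_mul, Finset.sum_mul]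
    apply Finset.sum_congr rfl
    intro p hp
    rw [Finset.HasAntidiagonal.mem_antidiagonal] at hp
    simp only [hFn, hp]
    rfl
  have hR : coeff γ (comp f H * comp g H) = ∑ p ∈ S ×ˢ S, Fn p := by
    rw [MvPowerSeries.coeff_mul]
    have step : ∀ q ∈ Finset.HasAntidiagonal.antidiagonal γ,
        coeff q.1 (comp f H) * coeff q.2 (comp g H) =
        ∑ p ∈ S ×ˢ S, coeff p.1 f * coeff p.2 g *
          (coeff q.1 (P p.1) * coeff q.2 (P p.2)) := by
      intro q hq
      rw [Finset.HasAntidiagonal.mem_antidiagonal] at hq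
      have h1 : dg q.1 ≤ d := by
        have : dg q.1 + dg q.2 = d := by rw [hd, ← hq, dg_add]
        omega
      have h2 : dg q.2 ≤ d := by
        have : dg q.1 + dg q.2 = d := by rw [hd, ← hq, dg_add]
        omega
      rw [coeff_comp hH f h1, coeff_comp hH g h2, Finset.sum_mul_sum]
      rw [Finset.sum_product]
      apply Finset.sum_congr rfl; intro δ _
      apply Finset.sum_congr rfl; intro ε _
      ring
    rw [Finset.sum_congr rfl step, Finset.sum_comm]
    apply Finset.sum_congr rfl
    intro p _
    rw [← Finset.mul_sum, hFn]
    congr 1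
    rw [show P (p.1 + p.2) = P p.1 * P p.2 from prod_pow_add H p.1 p.2,
      MvPowerSeries.coeff_mul]
  rw [hL, hR]
  apply Finset.sum_subset
  · intro p hp
    rw [Finset.mem_biUnion] at hp
    obtain ⟨β, hβ, hpβ⟩ := hp
    rw [Finset.HasAntidiagonal.mem_antidiagonal] at hpβ
    have hβ' : ∀ j, β j ≤ d := mem_Sb.mp hβ
    refine Finset.mem_product.mpr ⟨mem_Sb.mpr fun j => ?_, mem_Sb.mpr fun j => ?_⟩ <;>
    · have h4 := hβ' j
      rw [← hpβ] at h4
      simp only [Finsupp.add_apply] at h4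
      omega
  · intro p hp hnp
    have hsum : p.1 + p.2 ∉ S := by
      intro hmem
      exact hnp (Finset.mem_biUnion.mpr ⟨p.1 + p.2, hmem, Finset.HasAntidiagonal.mem_antidiagonal.mpr rfl⟩)
    have : d < dg (p.1 + p.2) := by
      by_contra hle
      exact hsum (mem_Sb_of_dg_le (by omega))
    rw [hFn]
    simp only []
    rw [coeff_prod_pow_order hH (by omega : dg γ < dg (p.1 + p.2)), mul_zero]

end CompAux

namespace CompAux

variable {F : Type*} [Field F] {n : ℕ}

lemma comp_zero {H : Fin n → Mv F n} (hH : ∀ i, coeff 0 (H i) = 0) :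
    comp (0 : Mv F n) H = 0 := by
  ext γ
  rw [coeff_comp hH _ (le_refl (dg γ))]
  simp

/-- composition with a fixed nonunit vector, as a ring homomorphism -/
noncomputable def compHom {H : Fin n → Mv F n} (hH : ∀ i, coeff 0 (H i) = 0) :
    Mv F n →+* Mv F n where
  toFun f := comp f H
  map_one' := comp_one hH
  map_mul' := comp_mul hH
  map_zero' := comp_zero hH
  map_add' := comp_add hH

lemma comp_prod_pow {H : Fin n → Mv F n} (hH : ∀ i, coeff 0 (H i) = 0)
    (G : Fin n → Mv F n) (α : Fin n →₀ ℕ) :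
    comp (∏ i, G i ^ α i) H = ∏ i, (comp (G i) H) ^ α i := by
  have : comp (∏ i, G i ^ α i) H = compHom hH (∏ i, G i ^ α i) := rfl
  rw [this, map_prod]
  exact Finset.prod_congr rfl fun i _ => by rw [map_pow]; rfl

lemma dg_le_of_mem_Sb {d : ℕ} {β : Fin n →₀ ℕ} (h : β ∈ (Sb d : Finset (Fin n →₀ ℕ))) :
    dg β ≤ n * d := by
  have h1 := mem_Sb.mp h
  calc dg β = ∑ j, β j := rfl
    _ ≤ ∑ _j : Fin n, d := Finset.sum_le_sum fun j _ => h1 j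
    _ = n * d := by simp [Finset.sum_const, mul_comm]

lemma comp_assoc {G H : Fin n → Mv F n} (hG : ∀ i, coeff 0 (G i) = 0)
    (hH : ∀ i, coeff 0 (H i) = 0) (f : Mv F n) :
    comp (comp f G) H = comp f (fun i => comp (G i) H) := by
  classical
  have hK : ∀ i, coeff 0 (comp (G i) H) = 0 := fun i => by
    rw [coeff_zero_comp hH]; exact hG i
  ext γ
  rw [coeff_comp hH _ (le_refl (dg γ)), coeff_comp hK f (Nat.le_add_left (dg γ) (n * dg γ))]
  have step1 : ∀ β ∈ (Sb (dg γ) : Finset (Fin n →₀ ℕ)),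
      coeff β (comp f G) * coeff γ (∏ i, H i ^ β i) =
      ∑ α ∈ (Sb (n * dg γ + dg γ) : Finset (Fin n →₀ ℕ)),
        coeff α f * coeff β (∏ i, G i ^ α i) * coeff γ (∏ i, H i ^ β i) := by
    intro β hβ
    rw [coeff_comp hG f (le_trans (dg_le_of_mem_Sb hβ) (Nat.le_add_right _ _)), Finset.sum_mul]
  rw [Finset.sum_congr rfl step1, Finset.sum_comm]
  apply Finset.sum_congr rfl
  intro α _
  have h2 : (∑ β ∈ (Sb (dg γ) : Finset (Fin n →₀ ℕ)),
      coeff α f * coeff β (∏ i, G i ^ α i) * coeff γ (∏ i, H i ^ β i))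
      = coeff α f * coeff γ (comp (∏ i, G i ^ α i) H) := by
    rw [coeff_comp hH _ (le_refl (dg γ)), Finset.mul_sum]
    exact Finset.sum_congr rfl fun β _ => (mul_assoc _ _ _)
  rw [h2, comp_prod_pow hH]

lemma prod_X_pow (α : Fin n →₀ ℕ) :
    (∏ i, (MvPowerSeries.X i : Mv F n) ^ α i) = MvPowerSeries.monomial α 1 := by
  classical
  have key : ∀ s : Finset (Fin n), (∏ i ∈ s, (MvPowerSeries.X i : Mv F n) ^ α i) =
      MvPowerSeries.monomial (∑ i ∈ s, Finsupp.single i (α i)) 1 := by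
    intro s
    induction s using Finset.induction with
    | empty => simp [MvPowerSeries.monomial_zero_one]
    | insert _ _ h ih =>
      rw [Finset.prod_insert h, Finset.sum_insert h, MvPowerSeries.X_pow_eq, ih,
        MvPowerSeries.monomial_mul_monomial, one_mul]
  rw [key Finset.univ, Finsupp.univ_sum_single]

lemma comp_X_vec (f : Mv F n) : comp f (fun j => (MvPowerSeries.X j : Mv F n)) = f := by
  classical
  have hX : ∀ i, coeff 0 ((fun j => (MvPowerSeries.X j : Mv F n)) i) = 0 := fun i =>
    MvPowerSeries.coeff_zero_X i
  ext γ
  rw [coeff_comp hX f (le_refl (dg γ))]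
  have step : ∀ α ∈ (Sb (dg γ) : Finset (Fin n →₀ ℕ)),
      coeff α f * coeff γ (∏ i, (MvPowerSeries.X i : Mv F n) ^ α i) =
      if α = γ then coeff γ f else 0 := by
    intro α _
    rw [prod_X_pow, MvPowerSeries.coeff_monomial]
    rcases eq_or_ne α γ with rfl | h
    · simp
    · rw [if_neg (Ne.symm h), if_neg h, mul_zero]
  rw [Finset.sum_congr rfl step, Finset.sum_ite_eq' _ γ, if_pos (mem_Sb_of_dg_le (le_refl _))]

end CompAux

namespace CompAux

variable {F : Type*} [Field F] {n : ℕ}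

lemma coeff_single_comp {H : Fin n → Mv F n} (hH : ∀ i, coeff 0 (H i) = 0)
    (f : Mv F n) (k : Fin n) :
    coeff (Finsupp.single k 1) (comp f H) =
      ∑ j, coeff (Finsupp.single j 1) f * coeff (Finsupp.single k 1) (H j) := by
  classical
  have hdg : dg (Finsupp.single k 1 : Fin n →₀ ℕ) = 1 := dg_single k 1
  rw [coeff_comp hH f (le_of_eq hdg)]
  have himg : (Finset.univ.image fun j : Fin n => Finsupp.single j (1 : ℕ)) ⊆
      (Sb 1 : Finset (Fin n →₀ ℕ)) := by
    intro α hα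
    rw [Finset.mem_image] at hα
    obtain ⟨j, _, rfl⟩ := hα
    exact mem_Sb_of_dg_le (le_of_eq (dg_single j 1))
  rw [← Finset.sum_subset himg]
  · rw [Finset.sum_image (fun x _ y _ h => Finsupp.single_left_injective one_ne_zero h)]
    apply Finset.sum_congr rfl
    intro j _
    rw [prod_pow_single]
  · intro α hα hnα
    have hd : dg α ≠ 1 := by
      intro h1
      obtain ⟨j, rfl⟩ := dg_eq_one α h1
      exact hnα (Finset.mem_image.mpr ⟨j, Finset.mem_univ j, rfl⟩)
    rcases Nat.lt_or_ge (dg α) 1 with h | h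
    · have h0 : α = 0 := (dg_eq_zero_iff α).mp (by omega)
      subst h0
      simp only [Finsupp.coe_zero, Pi.zero_apply, pow_zero, Finset.prod_const_one]
      rw [MvPowerSeries.coeff_one, if_neg (fun h => one_ne_zero (Finsupp.single_eq_zero.mp h)), mul_zero]
    · have h2 : 2 ≤ dg α := by omega
      rw [coeff_prod_pow_order hH (by omega : dg (Finsupp.single k 1 : Fin n →₀ ℕ) < dg α),
        mul_zero]

lemma matrix_of_comp {A B : Fin n → Mv F n} (hB : ∀ i, coeff 0 (B i) = 0)
    (h : ∀ i, comp (A i) B = MvPowerSeries.X i) :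
    (Matrix.of fun i j => coeff (Finsupp.single j 1) (A i)) *
      (Matrix.of fun i j => coeff (Finsupp.single j 1) (B i)) = 1 := by
  classical
  ext i k
  rw [Matrix.mul_apply]
  simp only [Matrix.of_apply]
  rw [← coeff_single_comp hB (A i) k, h i, MvPowerSeries.coeff_X, Matrix.one_apply]
  congr 1
  simp [Finsupp.single_left_inj (one_ne_zero : (1:ℕ) ≠ 0), eq_comm]

lemma comp_unique {G H₁ H₂ : Fin n → Mv F n} (hG : ∀ i, coeff 0 (G i) = 0)
    (hH₁ : ∀ i, coeff 0 (H₁ i) = 0)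
    (h1 : ∀ i, comp (G i) H₁ = MvPowerSeries.X i)
    (h2 : ∀ i, comp (H₂ i) G = MvPowerSeries.X i) : H₂ = H₁ := by
  funext i
  have hassoc := comp_assoc hG hH₁ (H₂ i)
  rw [h2 i] at hassoc
  have hfun : (fun j => comp (G j) H₁) = fun j => (MvPowerSeries.X j : Mv F n) := funext h1
  rw [hfun, comp_X_vec] at hassoc
  rw [comp_X hH₁ i] at hassoc
  exact hassoc.symm

end CompAux

namespace CompAux

variable {F : Type*} [Field F] {n : ℕ}

lemma coeff_prod_pow_congr_aux {H H' : Fin n → Mv F n}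
    (hH : ∀ i, coeff 0 (H i) = 0) (hH' : ∀ i, coeff 0 (H' i) = 0) {d : ℕ}
    (hag : ∀ k δ, dg δ < d → coeff δ (H k) = coeff δ (H' k)) :
    ∀ (s : ℕ) (α : Fin n →₀ ℕ), dg α ≤ s → ∀ γ, dg γ + 1 < d + dg α →
      coeff γ (∏ i, H i ^ α i) = coeff γ (∏ i, H' i ^ α i) := by
  intro s
  induction s with
  | zero =>
    intro α hα γ _
    have h0 : α = 0 := (dg_eq_zero_iff α).mp (by omega)
    subst h0; simp
  | succ s ih =>
    intro α hα γ hγ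
    rcases Nat.eq_zero_or_pos (dg α) with h0 | h0
    · have h0' : α = 0 := (dg_eq_zero_iff α).mp h0
      subst h0'; simp
    · obtain ⟨j, α', rfl, hdg⟩ := exists_split (α := α) (by omega)
      rw [prod_pow_add, prod_pow_add, prod_pow_single, prod_pow_single]
      classical
      rw [MvPowerSeries.coeff_mul, MvPowerSeries.coeff_mul]
      apply Finset.sum_congr rfl
      rintro ⟨δ, ε⟩ hp
      rw [Finset.HasAntidiagonal.mem_antidiagonal] at hp
      have hde : dg δ + dg ε = dg γ := by rw [← dg_add, hp]
      rcases Nat.lt_or_ge (dg ε) d with hε | hε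
      · rcases Nat.lt_or_ge (dg δ + 1) (d + dg α') with hδ | hδ
        · rw [ih α' (by omega) δ hδ, hag j ε hε]
        · have hε0 : ε = 0 := (dg_eq_zero_iff ε).mp (by omega)
          subst hε0
          rw [hH j, hH' j, mul_zero, mul_zero]
      · rw [coeff_prod_pow_order hH (show dg δ < dg α' by omega),
          coeff_prod_pow_order hH' (show dg δ < dg α' by omega), zero_mul, zero_mul]

lemma coeff_comp_congr {H H' : Fin n → Mv F n}
    (hH : ∀ i, coeff 0 (H i) = 0) (hH' : ∀ i, coeff 0 (H' i) = 0) {d : ℕ}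
    (hag : ∀ k δ, dg δ < d → coeff δ (H k) = coeff δ (H' k))
    {f : Mv F n} (hf0 : coeff 0 f = 0)
    (hf1 : ∀ j, coeff (Finsupp.single j 1) f = 0)
    {γ : Fin n →₀ ℕ} (hγ : dg γ ≤ d) :
    coeff γ (comp f H) = coeff γ (comp f H') := by
  rw [coeff_comp hH f (le_refl (dg γ)), coeff_comp hH' f (le_refl (dg γ))]
  apply Finset.sum_congr rfl
  intro α _
  rcases eq_or_ne (coeff α f) 0 with h | h
  · rw [h, zero_mul, zero_mul]
  · have h2 : 2 ≤ dg α := by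
      by_contra hlt
      interval_cases hdgα : dg α
      · exact h (by rw [(dg_eq_zero_iff α).mp hdgα]; exact hf0)
      · obtain ⟨j, rfl⟩ := dg_eq_one α hdgα
        exact h (hf1 j)
    congr 1
    exact coeff_prod_pow_congr_aux hH hH' hag (dg α) α le_rfl γ (by omega)

end CompAux

namespace CompAux

variable {F : Type*} [Field F] {n : ℕ}

lemma comp_sum {H : Fin n → Mv F n} (hH : ∀ i, coeff 0 (H i) = 0)
    {ι : Type*} (s : Finset ι) (f : ι → Mv F n) :
    comp (∑ i ∈ s, f i) H = ∑ i ∈ s, comp (f i) H :=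
  map_sum (compHom hH) f s

lemma exists_right_inverse {G : Fin n → Mv F n} (hG : ∀ i, coeff 0 (G i) = 0)
    (hdet : (Matrix.of fun i j => coeff (Finsupp.single j 1) (G i)).det ≠ 0) :
    ∃ H : Fin n → Mv F n, (∀ i, coeff 0 (H i) = 0) ∧
      ∀ i, comp (G i) H = MvPowerSeries.X i := by
  classical
  set J : Matrix (Fin n) (Fin n) F :=
    Matrix.of fun i j => coeff (Finsupp.single j 1) (G i) with hJdef
  set K := J⁻¹ with hKdef
  have hJK : J * K = 1 := Matrix.mul_nonsing_inv J (isUnit_iff_ne_zero.mpr hdet)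
  set R : Fin n → Mv F n := fun j => G j - ∑ i, (J j i) • MvPowerSeries.X i with hRdef
  have hR0 : ∀ j, coeff 0 (R j) = 0 := by
    intro j
    rw [hRdef]
    simp only [map_sub, map_sum, LinearMap.map_smul, smul_eq_mul,
      MvPowerSeries.coeff_zero_X, mul_zero, Finset.sum_const_zero, sub_zero]
    exact hG j
  have hR1 : ∀ j k, coeff (Finsupp.single k 1) (R j) = 0 := by
    intro j k
    rw [hRdef]
    simp only [map_sub, map_sum, LinearMap.map_smul, smul_eq_mul, MvPowerSeries.coeff_X]
    have : ∀ i : Fin n,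
        J j i * (if (Finsupp.single k 1 : Fin n →₀ ℕ) = Finsupp.single i 1 then (1:F) else 0) =
        if i = k then J j k else 0 := by
      intro i
      rcases eq_or_ne i k with rfl | h
      · simp
      · rw [if_neg (fun hh => h (Finsupp.single_left_inj one_ne_zero |>.mp hh).symm), if_neg h,
          mul_zero]
    rw [Finset.sum_congr rfl fun i _ => this i, Finset.sum_ite_eq' _ k, if_pos (Finset.mem_univ k)]
    have : coeff (Finsupp.single k 1) (G j) = J j k := rfl
    rw [this, sub_self]
  set Ψ : (Fin n → Mv F n) → (Fin n → Mv F n) :=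
    fun H i => ∑ j, K i j • (MvPowerSeries.X j - comp (R j) H) with hΨdef
  have coeffΨ : ∀ (H : Fin n → Mv F n) (i : Fin n) (γ : Fin n →₀ ℕ),
      coeff γ (Ψ H i) =
      ∑ j, K i j * (coeff γ (MvPowerSeries.X j) - coeff γ (comp (R j) H)) := by
    intro H i γ
    rw [hΨdef]
    simp only [map_sum, LinearMap.map_smul, smul_eq_mul, map_sub]
  have hΨ0 : ∀ H : Fin n → Mv F n, (∀ i, coeff 0 (H i) = 0) →
      ∀ i, coeff 0 (Ψ H i) = 0 := by
    intro H hH i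
    rw [coeffΨ]
    apply Finset.sum_eq_zero
    intro j _
    rw [MvPowerSeries.coeff_zero_X, coeff_zero_comp hH, hR0 j, sub_zero, mul_zero]
  have hΨcontract : ∀ (H H' : Fin n → Mv F n), (∀ i, coeff 0 (H i) = 0) →
      (∀ i, coeff 0 (H' i) = 0) → ∀ d : ℕ,
      (∀ k δ, dg δ < d → coeff δ (H k) = coeff δ (H' k)) →
      ∀ γ, dg γ ≤ d → ∀ i, coeff γ (Ψ H i) = coeff γ (Ψ H' i) := by
    intro H H' hH hH' d hag γ hγ i
    rw [coeffΨ, coeffΨ]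
    apply Finset.sum_congr rfl
    intro j _
    rw [coeff_comp_congr hH hH' hag (hR0 j) (hR1 j) hγ]
  set seq : ℕ → (Fin n → Mv F n) := fun m => Ψ^[m] (fun _ => 0) with hseqdef
  have hseqsucc : ∀ m, seq (m + 1) = Ψ (seq m) := by
    intro m
    rw [hseqdef]
    exact Function.iterate_succ_apply' Ψ m _
  have hseq0 : ∀ m i, coeff 0 (seq m i) = 0 := by
    intro m
    induction m with
    | zero => intro i; simp [hseqdef]
    | succ m ih =>
      intro i
      rw [hseqsucc m]
      exact hΨ0 (seq m) ih i
  have hstab : ∀ m γ, dg γ ≤ m → ∀ i, coeff γ (seq (m + 1) i) = coeff γ (seq m i) := by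
    intro m
    induction m with
    | zero =>
      intro γ hγ i
      have : γ = 0 := (dg_eq_zero_iff γ).mp (by omega)
      subst this
      rw [hseq0 (0 + 1) i, hseq0 0 i]
    | succ m ih =>
      intro γ hγ i
      rw [hseqsucc (m + 1)]
      conv_rhs => rw [hseqsucc m]
      exact hΨcontract (seq (m + 1)) (seq m) (hseq0 _) (hseq0 _) (m + 1)
        (fun k δ hδ => ih δ (by omega) k) γ hγ i
  have hstab' : ∀ (γ : Fin n →₀ ℕ) (i : Fin n) (m m' : ℕ), dg γ ≤ m → m ≤ m' →
      coeff γ (seq m' i) = coeff γ (seq m i) := by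
    intro γ i m m' hm hmm'
    induction m', hmm' using Nat.le_induction with
    | base => rfl
    | succ m' hmm' ih => rw [hstab m' γ (by omega) i, ih]
  set Hlim : Fin n → Mv F n := fun i γ => coeff γ (seq (dg γ + 1) i) with hHlimdef
  have hHlim : ∀ (γ : Fin n →₀ ℕ) (i : Fin n) (m : ℕ), dg γ ≤ m →
      coeff γ (Hlim i) = coeff γ (seq m i) := by
    intro γ i m hm
    have h1 : coeff γ (Hlim i) = coeff γ (seq (dg γ + 1) i) := rfl
    rw [h1]
    rcases le_total m (dg γ + 1) with h | h
    · exact hstab' γ i m (dg γ + 1) hm h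
    · exact (hstab' γ i (dg γ + 1) m (Nat.le_succ _) h).symm
  have hHlim0 : ∀ i, coeff 0 (Hlim i) = 0 := by
    intro i
    rw [hHlim 0 i 0 (by simp [dg])]
    exact hseq0 0 i
  have hfix : ∀ i, Hlim i = Ψ Hlim i := by
    intro i
    ext γ
    rw [hHlim γ i (dg γ + 1) (Nat.le_succ _), hseqsucc (dg γ)]
    exact hΨcontract (seq (dg γ)) Hlim (hseq0 _) hHlim0 (dg γ)
      (fun k δ hδ => (hHlim δ k (dg γ) (by omega)).symm) γ le_rfl i
  refine ⟨Hlim, hHlim0, ?_⟩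
  intro l
  have step1 : ∑ i, J l i • Hlim i =
      MvPowerSeries.X l - comp (R l) Hlim := by
    have e1 : ∀ i, J l i • Hlim i =
        ∑ j, (J l i * K i j) • (MvPowerSeries.X j - comp (R j) Hlim) := by
      intro i
      rw [hfix i, hΨdef]
      rw [Finset.smul_sum]
      exact Finset.sum_congr rfl fun j _ => smul_smul _ _ _
    rw [Finset.sum_congr rfl fun i _ => e1 i, Finset.sum_comm]
    have e2 : ∀ j, (∑ i, (J l i * K i j) • (MvPowerSeries.X j - comp (R j) Hlim)) =
        ((J * K) l j) • (MvPowerSeries.X j - comp (R j) Hlim) := by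
      intro j
      rw [← Finset.sum_smul, Matrix.mul_apply]
    rw [Finset.sum_congr rfl fun j _ => e2 j, hJK]
    have e3 : ∀ j, ((1 : Matrix (Fin n) (Fin n) F) l j) •
        (MvPowerSeries.X j - comp (R j) Hlim) =
        if j = l then MvPowerSeries.X l - comp (R l) Hlim else 0 := by
      intro j
      rw [Matrix.one_apply]
      rcases eq_or_ne j l with rfl | h
      · simp
      · rw [if_neg (Ne.symm h), if_neg h, zero_smul]
    rw [Finset.sum_congr rfl fun j _ => e3 j, Finset.sum_ite_eq' _ l, if_pos (Finset.mem_univ l)]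
  have hsplitG : G l = (∑ i, J l i • MvPowerSeries.X i) + R l := by
    rw [hRdef]
    ring
  rw [hsplitG, comp_add hHlim0, comp_sum hHlim0]
  have e4 : ∀ i, comp (J l i • MvPowerSeries.X i) Hlim = J l i • Hlim i := by
    intro i
    rw [comp_smul hHlim0, comp_X hHlim0]
  rw [Finset.sum_congr rfl fun i _ => e4 i, step1]
  ring

end CompAux

namespace CompAux

variable {F : Type*} [Field F] {n : ℕ}

lemma exists_inverse {G : Fin n → Mv F n} (hG : ∀ i, coeff 0 (G i) = 0)
    (hdet : (Matrix.of fun i j => coeff (Finsupp.single j 1) (G i)).det ≠ 0) :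
    ∃ H : Fin n → Mv F n, (∀ i, coeff 0 (H i) = 0) ∧
      (∀ i, comp (H i) G = MvPowerSeries.X i) ∧
      (∀ i, comp (G i) H = MvPowerSeries.X i) := by
  obtain ⟨H, hH0, hGH⟩ := exists_right_inverse hG hdet
  have hmul := matrix_of_comp hH0 hGH
  have hdetH : (Matrix.of fun i j => coeff (Finsupp.single j 1) (H i)).det ≠ 0 := by
    intro h0
    have hd := congrArg Matrix.det hmul
    rw [Matrix.det_mul, h0, mul_zero, Matrix.det_one] at hd
    exact zero_ne_one hd
  obtain ⟨H', hH'0, hHH'⟩ := exists_right_inverse hH0 hdetH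
  have hH'G : ∀ l, H' l = G l := by
    intro l
    have ha := comp_assoc hH0 hH'0 (G l)
    rw [hGH l, comp_X hH'0 l] at ha
    have hfun : (fun i => comp (H i) H') = fun i => (MvPowerSeries.X i : Mv F n) :=
      funext hHH'
    rw [hfun, comp_X_vec] at ha
    exact ha
  refine ⟨H, hH0, fun i => ?_, hGH⟩
  rw [show G = H' from funext fun l => (hH'G l).symm]
  exact hHH' i

end CompAux

open CompAux

/-- A nonunit vector `G` has a two-sided composition inverse (a nonunit vector
`H` with `H ∘ G = G ∘ H = (x₁,…,xₙ)`) iff `det J_G(θ) ≠ 0`; moreover the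
composition inverse, when it exists, is unique. -/
theorem comp_inverse_iff_det_ne_zero_and_unique {F : Type*} [Field F] {n : ℕ}
    (G : Fin n → MvPowerSeries (Fin n) F)
    (hG : ∀ i, coeff 0 (G i) = 0) :
    ((∃ H : Fin n → MvPowerSeries (Fin n) F,
        (∀ i, coeff 0 (H i) = 0) ∧
        (∀ i, comp (H i) G = MvPowerSeries.X i) ∧
        (∀ i, comp (G i) H = MvPowerSeries.X i)) ↔
      (Matrix.of fun i j => coeff (Finsupp.single j 1) (G i)).det ≠ 0) ∧
    (∀ H₁ H₂ : Fin n → MvPowerSeries (Fin n) F,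
      (∀ i, coeff 0 (H₁ i) = 0) → (∀ i, comp (H₁ i) G = MvPowerSeries.X i) →
      (∀ i, comp (G i) H₁ = MvPowerSeries.X i) →
      (∀ i, coeff 0 (H₂ i) = 0) → (∀ i, comp (H₂ i) G = MvPowerSeries.X i) →
      (∀ i, comp (G i) H₂ = MvPowerSeries.X i) → H₁ = H₂) := by

  constructor
  · constructor
    · rintro ⟨H, hH0, hHG, _⟩
      have hmul := matrix_of_comp hG hHG
      intro h0
      have hd := congrArg Matrix.det hmul
      rw [Matrix.det_mul, h0, mul_zero, Matrix.det_one] at hd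
      exact zero_ne_one hd
    · intro hdet
      exact exists_inverse hG hdet
  · intro H₁ H₂ h₁0 _ h₁r _ h₂l _
    exact (comp_unique hG h₁0 h₁r h₂l).symm
end
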